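/- Let g be a word over {0,1,2} that contains no length-2 factor cd with c ≡ d+1 (mod 3). Then for any factor z of g containing at least two distinct letters, the reversal z^R is not a factor of g. -/

import Mathlib

lemma exists_adj_pair {α : Type*} (z : List α)
    (htwo : ∃ a ∈ z, ∃ b ∈ z, a ≠ b) :
    ∃ c d, [c, d] <:+: z ∧ c ≠ d := by
  induction z with
  | nil => simp at htwo
  | cons x t ih =>
    obtain ⟨a, ha, b, hb, hab⟩ := htwo
    match t, ha, hb with
    | [], ha, hb =>
      simp at ha hb; subst ha; subst hb; exact absurd rfl hab
    | y :: t', ha, hb =>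
      by_cases hxy : x = y
      · subst hxy
        have ha' : a ∈ x :: t' := by
          rcases List.mem_cons.1 ha with h1 | h1
          · exact h1 ▸ List.mem_cons_self
          · exact h1
        have hb' : b ∈ x :: t' := by
          rcases List.mem_cons.1 hb with h1 | h1
          · exact h1 ▸ List.mem_cons_self
          · exact h1
        obtain ⟨c, d, hcd, hne⟩ := ih ⟨a, ha', b, hb', hab⟩
        exact ⟨c, d, hcd.trans (List.infix_cons (List.infix_refl _)), hne⟩
      · exact ⟨x, y, ⟨[], t', rfl⟩, hxy⟩

/-- If a word `g` over `{0,1,2}` has no length-2 factor `cd` with `c ≡ d+1 (mod 3)`,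
then no factor of `g` containing two distinct letters has its reversal a factor of `g`. -/
theorem stmt8 (g : List (Fin 3))
    (h : ∀ c d : Fin 3, [c, d] <:+: g → c ≠ d + 1)
    (z : List (Fin 3)) (hz : z <:+: g)
    (htwo : ∃ a ∈ z, ∃ b ∈ z, a ≠ b) :
    ¬ z.reverse <:+: g := by
  intro hrev
  obtain ⟨c, d, hcd, hne⟩ := exists_adj_pair z htwo
  have h1 : c ≠ d + 1 := h c d (hcd.trans hz)
  have hd : d = c + 1 := by fin_cases c <;> fin_cases d <;> simp_all
  have h2 : [d, c] <:+: z.reverse := by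
    have := (List.reverse_infix (l₁ := [c, d]) (l₂ := z)).2 hcd
    simpa using this
  exact h d c (h2.trans hrev) (by rw [hd])
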